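/- Let h be a torsion-free, conservative horizontal endomorphism on a Finsler algebroid (E, F) with fundamental two-form ω = d^L d^L_J F. Then i_h ω = ω, where (i_h ω)(X̃, Ỹ) = ω(hX̃, Ỹ) + ω(X̃, hỸ). -/

import Mathlib

/-!
We work with a Lie algebroid `π : E → M` in a (global) trivialization:
the base `M` is modelled on a real normed space `A`, the fibre of `E` is a real
normed space `B`, the total space is `E = A × B`, sections of `E` are maps
`A → B`, the anchor is `ρ : A → (B →L[ℝ] A)` and the structure function of the
bracket is `Lb : A → (B →L[ℝ] B →L[ℝ] B)`.  The prolongation `L^π E → E` is the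
trivial bundle with fibre `B × B`; its sections are pairs of maps `(A × B) → B`
(the components along the canonical frames `𝒳_α` and `𝒱_α`).
-/

noncomputable section

variable {A B : Type*} [NormedAddCommGroup A] [NormedSpace ℝ A]
  [NormedAddCommGroup B] [NormedSpace ℝ B]

/-- Sections of the prolongation `L^π E → E`. -/
abbrev Sec (A B : Type*) := ((A × B) → B) × ((A × B) → B)

/-- The axioms of a Lie algebroid (smoothness, antisymmetry and the two
structure equations: anchor compatibility and the Jacobi identity). -/
def IsLieAlgebroidData (ρ : A → B →L[ℝ] A) (Lb : A → B →L[ℝ] B →L[ℝ] B) : Prop :=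
  ContDiff ℝ (⊤ : ℕ∞) ρ ∧ ContDiff ℝ (⊤ : ℕ∞) Lb ∧
    (∀ x u v, Lb x u v = - Lb x v u) ∧
    (∀ x u v, fderiv ℝ ρ x (ρ x u) v - fderiv ℝ ρ x (ρ x v) u = ρ x (Lb x u v)) ∧
    (∀ x u v w,
      fderiv ℝ Lb x (ρ x u) v w + Lb x u (Lb x v w) +
        fderiv ℝ Lb x (ρ x v) w u + Lb x v (Lb x w u) +
          fderiv ℝ Lb x (ρ x w) u v + Lb x w (Lb x u v) = 0)

/-- The Lie algebroid bracket `[X, Y]_E` of two sections of `E`. -/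
def abr (ρ : A → B →L[ℝ] A) (Lb : A → B →L[ℝ] B →L[ℝ] B) (X Y : A → B) : A → B :=
  fun x => fderiv ℝ Y x (ρ x (X x)) - fderiv ℝ X x (ρ x (Y x)) + Lb x (X x) (Y x)

/-- The action `ρ(X)(f)` of a section through the anchor. -/
def ρf (ρ : A → B →L[ℝ] A) (X : A → B) (f : A → ℝ) : A → ℝ :=
  fun x => fderiv ℝ f x (ρ x (X x))

/-- Vertical lift `f^∨ = f ∘ π` of a function on `M`. -/
def fvert (f : A → ℝ) : A × B → ℝ := fun p => f p.1

/-- Complete lift `f^c(u) = ρ(u)(f)` of a function on `M`. -/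
def fcomp (ρ : A → B →L[ℝ] A) (f : A → ℝ) : A × B → ℝ :=
  fun p => fderiv ℝ f p.1 (ρ p.1 p.2)

/-- The tangent vector to `E` determined by a prolongation section through the
prolongation anchor `ρ_L(u, z) = z`. -/
def ρL (ρ : A → B →L[ℝ] A) (U : Sec A B) (p : A × B) : A × B :=
  (ρ p.1 (U.1 p), U.2 p)

/-- The bracket `[·,·]_L` of the prolongation Lie algebroid `L^π E`. -/
def pbr (ρ : A → B →L[ℝ] A) (Lb : A → B →L[ℝ] B →L[ℝ] B) (U V : Sec A B) : Sec A B :=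
  (fun p => fderiv ℝ V.1 p (ρL ρ U p) - fderiv ℝ U.1 p (ρL ρ V p) + Lb p.1 (U.1 p) (V.1 p),
   fun p => fderiv ℝ V.2 p (ρL ρ U p) - fderiv ℝ U.2 p (ρL ρ V p))

/-- The vertical endomorphism `J = i ∘ j` of `L^π E`. -/
def vJ (U : Sec A B) : Sec A B := (0, U.1)

/-- The Liouville (Euler) section `C = i ∘ δ`. -/
def Liou : Sec A B := (0, fun p => p.2)

/-- Vertical lift `X^V` of a section of `E` to `L^π E`. -/
def vlift (X : A → B) : Sec A B := (0, fun p => X p.1)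

/-- Complete lift `X^C` of a section of `E` to `L^π E`. -/
def clift (ρ : A → B →L[ℝ] A) (Lb : A → B →L[ℝ] B →L[ℝ] B) (X : A → B) : Sec A B :=
  (fun p => X p.1, fun p => fderiv ℝ X p.1 (ρ p.1 p.2) - Lb p.1 (X p.1) p.2)

/-- The horizontal endomorphism with coefficient `𝓑`
(`h = (𝒳_β + 𝓑^α_β 𝒱_α) ⊗ 𝒳^β`). -/
def hor (𝓑 : A × B → B →L[ℝ] B) (U : Sec A B) : Sec A B :=
  (U.1, fun p => 𝓑 p (U.1 p))

/-- The vertical projector `v = Id − h` associated to a horizontal endomorphism. -/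
def vpr (𝓑 : A × B → B →L[ℝ] B) (U : Sec A B) : Sec A B := U - hor 𝓑 U

/-- Horizontal lift `X^h = h(X^C)`. -/
def hlift (ρ : A → B →L[ℝ] A) (Lb : A → B →L[ℝ] B →L[ℝ] B)
    (𝓑 : A × B → B →L[ℝ] B) (X : A → B) : Sec A B :=
  hor 𝓑 (clift ρ Lb X)

/-- Multiplication of a prolongation section by a function on `E`. -/
def fsmul (g : A × B → ℝ) (U : Sec A B) : Sec A B :=
  (fun p => g p • U.1 p, fun p => g p • U.2 p)

/-- Generalized Frölicher–Nijenhuis bracket `[K, Z]^{F-N}` of a `(1,1)`-tensor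
with a section: `[K, Z]^{F-N}(U) = [K(U), Z]_L − K([U, Z]_L)`. -/
def fnKZ (ρ : A → B →L[ℝ] A) (Lb : A → B →L[ℝ] B →L[ℝ] B)
    (K : Sec A B → Sec A B) (Z U : Sec A B) : Sec A B :=
  pbr ρ Lb (K U) Z - K (pbr ρ Lb U Z)

/-- Generalized Frölicher–Nijenhuis bracket `[Z, K]^{F-N}` of a section with a
`(1,1)`-tensor. -/
def fnZK (ρ : A → B →L[ℝ] A) (Lb : A → B →L[ℝ] B →L[ℝ] B)
    (Z : Sec A B) (K : Sec A B → Sec A B) (U : Sec A B) : Sec A B :=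
  pbr ρ Lb Z (K U) - K (pbr ρ Lb Z U)

/-- Generalized Frölicher–Nijenhuis bracket of two `(1,1)`-tensors, evaluated on
two sections. -/
def fnKL (ρ : A → B →L[ℝ] A) (Lb : A → B →L[ℝ] B →L[ℝ] B)
    (K L' : Sec A B → Sec A B) (U V : Sec A B) : Sec A B :=
  pbr ρ Lb (K U) (L' V) + pbr ρ Lb (L' U) (K V)
    + K (L' (pbr ρ Lb U V)) + L' (K (pbr ρ Lb U V))
    - K (pbr ρ Lb U (L' V)) - K (pbr ρ Lb (L' U) V)
    - L' (pbr ρ Lb U (K V)) - L' (pbr ρ Lb (K U) V)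

/-- The slit total space `E ∖ {0}` (complement of the zero section). -/
def Slit : Set (A × B) := {p | p.2 ≠ 0}

/-- Smoothness of a prolongation section (on all of `E`). -/
def SecSmooth (U : Sec A B) : Prop :=
  ContDiff ℝ (⊤ : ℕ∞) U.1 ∧ ContDiff ℝ (⊤ : ℕ∞) U.2

/-- Smoothness of a prolongation section away from the zero section. -/
def SecSmoothOn (U : Sec A B) : Prop :=
  ContDiffOn ℝ (⊤ : ℕ∞) U.1 (Slit (A := A) (B := B)) ∧
    ContDiffOn ℝ (⊤ : ℕ∞) U.2 (Slit (A := A) (B := B))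

/-- Equality of prolongation sections away from the zero section. -/
def OnSlit (U V : Sec A B) : Prop :=
  ∀ p : A × B, p.2 ≠ 0 → U.1 p = V.1 p ∧ U.2 p = V.2 p

/-- The semispray associated to the horizontal endomorphism `𝓑` (i.e. `h(S)` for
any semispray `S`). -/
def Sassoc (𝓑 : A × B → B →L[ℝ] B) : Sec A B :=
  (fun p => p.2, fun p => 𝓑 p p.2)

/-- The Nijenhuis tensor `N_h` of the horizontal endomorphism `𝓑`. -/
def NijH (ρ : A → B →L[ℝ] A) (Lb : A → B →L[ℝ] B →L[ℝ] B)
    (𝓑 : A × B → B →L[ℝ] B) (U V : Sec A B) : Sec A B :=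
  pbr ρ Lb (hor 𝓑 U) (hor 𝓑 V) - hor 𝓑 (pbr ρ Lb (hor 𝓑 U) V)
    - hor 𝓑 (pbr ρ Lb U (hor 𝓑 V)) + hor 𝓑 (pbr ρ Lb U V)

/-- The curvature `Ω = −N_h` of a horizontal endomorphism. -/
def CurvH (ρ : A → B →L[ℝ] A) (Lb : A → B →L[ℝ] B →L[ℝ] B)
    (𝓑 : A × B → B →L[ℝ] B) (U V : Sec A B) : Sec A B :=
  - NijH ρ Lb 𝓑 U V

/-- The strong torsion `T = i_S t + H` of a horizontal endomorphism, where
`t = [J, h]^{F-N}` is the weak torsion and `H = [h, C]^{F-N}` the tension. -/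
def StrongTor (ρ : A → B →L[ℝ] A) (Lb : A → B →L[ℝ] B →L[ℝ] B)
    (𝓑 : A × B → B →L[ℝ] B) (U : Sec A B) : Sec A B :=
  fnKL ρ Lb vJ (hor 𝓑) (Sassoc 𝓑) U + fnKZ ρ Lb (hor 𝓑) Liou U

/-- The almost complex structure `F = h ∘ [S, h]^{F-N} − J` induced by a
horizontal endomorphism with associated semispray `S`. -/
def bigF (ρ : A → B →L[ℝ] A) (Lb : A → B →L[ℝ] B →L[ℝ] B)
    (𝓑 : A × B → B →L[ℝ] B) (U : Sec A B) : Sec A B :=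
  hor 𝓑 (fnZK ρ Lb (Sassoc 𝓑) (hor 𝓑) U) - vJ U

/-- Homogeneity of a horizontal endomorphism: its tension `H = [h, C]^{F-N}`
vanishes. -/
def HomogeneousH (ρ : A → B →L[ℝ] A) (Lb : A → B →L[ℝ] B →L[ℝ] B)
    (𝓑 : A × B → B →L[ℝ] B) : Prop :=
  ∀ U : Sec A B, SecSmoothOn U → OnSlit (fnKZ ρ Lb (hor 𝓑) Liou U) 0

/-- Torsion-freeness of a horizontal endomorphism: its weak torsion
`t = [J, h]^{F-N}` vanishes. -/
def TorsionFreeH (ρ : A → B →L[ℝ] A) (Lb : A → B →L[ℝ] B →L[ℝ] B)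
    (𝓑 : A × B → B →L[ℝ] B) : Prop :=
  ∀ U V : Sec A B, SecSmoothOn U → SecSmoothOn V →
    OnSlit (fnKL ρ Lb vJ (hor 𝓑) U V) 0

/-- The one-form `d^L_J F = i_J d^L F` of a Finsler function. -/
def θF (Fl : A × B → ℝ) (U : Sec A B) : A × B → ℝ :=
  fun p => fderiv ℝ Fl p ((0 : A), U.1 p)

/-- The fundamental two-form `ω = d^L d^L_J F` of a Finsler function. -/
def ωF (ρ : A → B →L[ℝ] A) (Lb : A → B →L[ℝ] B →L[ℝ] B)
    (Fl : A × B → ℝ) (U V : Sec A B) : A × B → ℝ :=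
  fun p => fderiv ℝ (θF Fl V) p (ρL ρ U p) - fderiv ℝ (θF Fl U) p (ρL ρ V p)
    - θF Fl (pbr ρ Lb U V) p

/-- The axioms of a Finsler algebroid: the fundamental function is smooth away
from the zero section, positive there, homogeneous of degree `2`
(`ρ_L(C)(F) = 2F`), and its fundamental form `ω = d^L d^L_J F` is
nondegenerate. -/
def IsFinslerData (ρ : A → B →L[ℝ] A) (Lb : A → B →L[ℝ] B →L[ℝ] B)
    (Fl : A × B → ℝ) : Prop :=
  ContDiffOn ℝ (⊤ : ℕ∞) Fl (Slit (A := A) (B := B)) ∧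
    (∀ p : A × B, p.2 ≠ 0 → 0 < Fl p) ∧
    (∀ p : A × B, p.2 ≠ 0 → fderiv ℝ Fl p ((0 : A), p.2) = 2 * Fl p) ∧
    (∀ W : Sec A B, SecSmoothOn W →
      (∀ U : Sec A B, SecSmoothOn U → ∀ p : A × B, p.2 ≠ 0 → ωF ρ Lb Fl W U p = 0) →
      ∀ p : A × B, p.2 ≠ 0 → W.1 p = 0 ∧ W.2 p = 0)

/-- Conservativity of a horizontal endomorphism: `d^L_h F = 0`. -/
def Conservative (ρ : A → B →L[ℝ] A) (Fl : A × B → ℝ)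
    (𝓑 : A × B → B →L[ℝ] B) : Prop :=
  ∀ p : A × B, p.2 ≠ 0 → ∀ z : B, fderiv ℝ Fl p (ρ p.1 z, 𝓑 p z) = 0

/-- The vertical metric `G(J X̃, J Ỹ) = ω(J X̃, Ỹ)`, evaluated on two vertical
sections. -/
def Gmet (ρ : A → B →L[ℝ] A) (Lb : A → B →L[ℝ] B →L[ℝ] B)
    (Fl : A × B → ℝ) (W₁ W₂ : Sec A B) : A × B → ℝ :=
  ωF ρ Lb Fl ((0 : (A × B) → B), W₁.2) (W₂.2, (0 : (A × B) → B))

/-- The prolongation `G̃(X̃, Ỹ) = G(J X̃, J Ỹ) + G(v X̃, v Ỹ)` of the vertical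
metric along the horizontal endomorphism `𝓑`. -/
def Gtil (ρ : A → B →L[ℝ] A) (Lb : A → B →L[ℝ] B →L[ℝ] B)
    (Fl : A × B → ℝ) (𝓑 : A × B → B →L[ℝ] B) (U V : Sec A B) : A × B → ℝ :=
  fun p => Gmet ρ Lb Fl (vJ U) (vJ V) p + Gmet ρ Lb Fl (vpr 𝓑 U) (vpr 𝓑 V) p

/-- The linear connection on `E` with Christoffel coefficient `Γ`:
`∇_X Y = ρ(X)(Y) + Γ(X, Y)`. -/
def covD (ρ : A → B →L[ℝ] A) (Γ : A → B →L[ℝ] B →L[ℝ] B) (X Y : A → B) : A → B :=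
  fun x => fderiv ℝ Y x (ρ x (X x)) + Γ x (X x) (Y x)

/-- The coefficient of the horizontal endomorphism `h_∇` generated by the linear
connection `Γ` (`𝓑^β_α = −y^γ Γ^β_{αγ}`). -/
def horOf (Γ : A → B →L[ℝ] B →L[ℝ] B) : A × B → B →L[ℝ] B :=
  fun p => -((Γ p.1).flip p.2)


section AuxLemmas
variable {A B : Type*} [NormedAddCommGroup A] [NormedSpace ℝ A]
  [NormedAddCommGroup B] [NormedSpace ℝ B]

omit [NormedSpace ℝ A] [NormedSpace ℝ B] in
lemma isOpen_slit : IsOpen (Slit (A := A) (B := B)) :=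
  isOpen_compl_singleton.preimage continuous_snd

lemma fderiv_zero_fun (p : A × B) : fderiv ℝ (0 : (A × B) → B) p = 0 :=
  congrFun (fderiv_const (0 : B)) p

lemma fderiv_theta (Fl : A × B → ℝ) (W1 : (A × B) → B) (p : A × B)
    (hFl : DifferentiableAt ℝ (fderiv ℝ Fl) p) (hW : DifferentiableAt ℝ W1 p) (w : A × B) :
    fderiv ℝ (fun q => fderiv ℝ Fl q ((0 : A), W1 q)) p w
      = fderiv ℝ (fderiv ℝ Fl) p w ((0 : A), W1 p)
        + fderiv ℝ Fl p ((0 : A), fderiv ℝ W1 p w) := by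
  have h1 : DifferentiableAt ℝ (fun q => ((0 : A), W1 q)) p :=
    (differentiableAt_const _).prodMk hW
  rw [fderiv_clm_apply hFl h1]
  have h2 : fderiv ℝ (fun q => ((0 : A), W1 q)) p
      = (fderiv ℝ (fun _ : A × B => (0 : A)) p).prod (fderiv ℝ W1 p) :=
    DifferentiableAt.fderiv_prodMk (differentiableAt_const _) hW
  simp [h2, add_comm]

end AuxLemmas

/-- On a Finsler algebroid `(E, F)`, if `h` is a torsion-free
conservative horizontal endomorphism, then `i_h ω = ω` for the fundamental
two-form `ω = d^L d^L_J F`. -/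
theorem torsion_free_conservative_ih_omega
    (ρ : A → B →L[ℝ] A) (Lb : A → B →L[ℝ] B →L[ℝ] B)
    (halg : IsLieAlgebroidData ρ Lb)
    (Fl : A × B → ℝ) (hF : IsFinslerData ρ Lb Fl)
    (𝓑 : A × B → B →L[ℝ] B)
    (h𝓑 : ContDiffOn ℝ (⊤ : ℕ∞) 𝓑 (Slit (A := A) (B := B)))
    (hcons : Conservative ρ Fl 𝓑)
    (htf : TorsionFreeH ρ Lb 𝓑) :
    ∀ U V : Sec A B, SecSmoothOn U → SecSmoothOn V →
      ∀ p : A × B, p.2 ≠ 0 →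
        ωF ρ Lb Fl (hor 𝓑 U) V p + ωF ρ Lb Fl U (hor 𝓑 V) p
          = ωF ρ Lb Fl U V p := by
  intro U V hU hV p hp
  have hps : Slit (A := A) (B := B) ∈ nhds p := isOpen_slit.mem_nhds hp
  have hFl2 : ContDiffAt ℝ (⊤ : ℕ∞) Fl p := hF.1.contDiffAt hps
  have hD2 : DifferentiableAt ℝ (fderiv ℝ Fl) p := by
    have := hFl2.fderiv_right (m := 1) (by norm_cast)
    exact this.differentiableAt (by norm_cast)
  have hU1 : DifferentiableAt ℝ U.1 p :=
    (hU.1.contDiffAt hps).differentiableAt (by norm_cast)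
  have hV1 : DifferentiableAt ℝ V.1 p :=
    (hV.1.contDiffAt hps).differentiableAt (by norm_cast)
  have h𝓑at : DifferentiableAt ℝ 𝓑 p :=
    (h𝓑.contDiffAt hps).differentiableAt (by norm_cast)
  have h𝓑z : ∀ z : B, DifferentiableAt ℝ (fun q => 𝓑 q z) p := fun z =>
    h𝓑at.clm_apply (differentiableAt_const z)
  -- symmetry of the second derivative of Fl at p
  have hsymm : ∀ w z : A × B,
      fderiv ℝ (fderiv ℝ Fl) p w z = fderiv ℝ (fderiv ℝ Fl) p z w := by
    intro w z
    refine second_derivative_symmetric_of_eventually (f := Fl) ?_ hD2.hasFDerivAt w z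
    filter_upwards [isOpen_slit.eventually_mem hp] with q hq
    exact (((hF.1.contDiffAt (isOpen_slit.mem_nhds hq))).differentiableAt
      (by norm_cast)).hasFDerivAt
  -- differentiated conservativity identity, in vertical directions
  have key1 : ∀ z c : B,
      fderiv ℝ (fderiv ℝ Fl) p ((0 : A), c) (ρ p.1 z, 𝓑 p z)
        = - fderiv ℝ Fl p ((0 : A), fderiv ℝ (fun q => 𝓑 q z) p ((0 : A), c)) := by
    intro z c
    have h1 : DifferentiableAt ℝ (fun y : A => ρ y z) p.1 :=
      ((halg.1.differentiable (by norm_cast)) p.1).clm_apply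
        (differentiableAt_const z)
    have hρz : DifferentiableAt ℝ (fun q : A × B => ρ q.1 z) p :=
      h1.comp p differentiableAt_fst
    have hm : DifferentiableAt ℝ (fun q : A × B => (ρ q.1 z, 𝓑 q z)) p := hρz.prodMk (h𝓑z z)
    have hzero : fderiv ℝ (fun q => fderiv ℝ Fl q (ρ q.1 z, 𝓑 q z)) p = 0 := by
      have hev : (fun q => fderiv ℝ Fl q (ρ q.1 z, 𝓑 q z)) =ᶠ[nhds p] (fun _ => (0 : ℝ)) := by
        filter_upwards [isOpen_slit.eventually_mem hp] with q hq
        exact hcons q hq z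
      rw [hev.fderiv_eq]
      exact congrFun (fderiv_const (0 : ℝ)) p
    have hmder : fderiv ℝ (fun q : A × B => (ρ q.1 z, 𝓑 q z)) p ((0 : A), c)
        = ((0 : A), fderiv ℝ (fun q => 𝓑 q z) p ((0 : A), c)) := by
      have h2 : fderiv ℝ (fun q : A × B => (ρ q.1 z, 𝓑 q z)) p
          = (fderiv ℝ (fun q : A × B => ρ q.1 z) p).prod (fderiv ℝ (fun q => 𝓑 q z) p) :=
        DifferentiableAt.fderiv_prodMk hρz (h𝓑z z)
      have h4 : fderiv ℝ (fun q : A × B => ρ q.1 z) p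
          = (fderiv ℝ (fun y : A => ρ y z) p.1).comp (ContinuousLinearMap.fst ℝ A B) :=
        (h1.hasFDerivAt.comp p hasFDerivAt_fst).fderiv
      simp [h2, h4]
    rw [fderiv_clm_apply hD2 hm] at hzero
    have h5 := congrFun (congrArg (fun (L : (A × B) →L[ℝ] ℝ) => (L : A × B → ℝ)) hzero)
      ((0 : A), c)
    simp only [ContinuousLinearMap.add_apply, ContinuousLinearMap.coe_comp',
      Function.comp_apply, ContinuousLinearMap.flip_apply, ContinuousLinearMap.zero_apply,
      ContinuousLinearMap.coe_coe] at h5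
    rw [hmder] at h5
    linarith
  -- torsion-freeness evaluated on constant sections
  have key2 : fderiv ℝ (fun q => 𝓑 q (V.1 p)) p ((0 : A), U.1 p)
      = fderiv ℝ (fun q => 𝓑 q (U.1 p)) p ((0 : A), V.1 p) + Lb p.1 (U.1 p) (V.1 p) := by
    have hsm : ∀ z : B, SecSmoothOn ((fun _ : A × B => z, 0) : Sec A B) :=
      fun z => ⟨contDiffOn_const, contDiffOn_const⟩
    have ht := (htf ((fun _ => U.1 p), 0) ((fun _ => V.1 p), 0)
      (hsm (U.1 p)) (hsm (V.1 p)) p hp).2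
    simp only [fnKL, pbr, vJ, hor, ρL, Prod.fst_add, Prod.snd_add, Prod.fst_sub, Prod.snd_sub,
      Pi.add_apply, Pi.sub_apply, Pi.zero_apply, Prod.snd_zero] at ht
    simp only [fderiv_fun_const, fderiv_zero_fun, Pi.zero_apply, ContinuousLinearMap.zero_apply,
      map_zero, map_neg, neg_zero, zero_sub, sub_zero, zero_add, add_zero, sub_self] at ht
    rw [← sub_eq_zero]
    abel_nf at ht ⊢
    convert ht using 2
  -- the main computation
  simp only [ωF, θF, pbr, ρL, hor]
  have hθV : θF Fl V = fun q => fderiv ℝ Fl q ((0 : A), V.1 q) := rfl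
  have hθU : θF Fl U = fun q => fderiv ℝ Fl q ((0 : A), U.1 q) := rfl
  have hθhU : θF Fl (U.1, fun p => 𝓑 p (U.1 p)) = fun q => fderiv ℝ Fl q ((0 : A), U.1 q) := rfl
  have hθhV : θF Fl (V.1, fun p => 𝓑 p (V.1 p)) = fun q => fderiv ℝ Fl q ((0 : A), V.1 q) := rfl
  rw [hθV, hθU, hθhU, hθhV]
  simp only [fderiv_theta Fl V.1 p hD2 hV1, fderiv_theta Fl U.1 p hD2 hU1]
  have hL : ∀ z : B, fderiv ℝ Fl p ((0 : A), z)
      = ((fderiv ℝ Fl p).comp (ContinuousLinearMap.inr ℝ A B)) z := fun z => rfl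
  set L := (fderiv ℝ Fl p).comp (ContinuousLinearMap.inr ℝ A B) with hLdef
  simp only [hL, map_add, map_sub]
  have e1 : fderiv ℝ (fderiv ℝ Fl) p (ρ p.1 (U.1 p), 𝓑 p (U.1 p)) ((0 : A), V.1 p)
      = - L (fderiv ℝ (fun q => 𝓑 q (U.1 p)) p ((0 : A), V.1 p)) := by
    rw [hsymm]
    rw [key1 (U.1 p) (V.1 p)]
    rw [hL]
  have e2 : fderiv ℝ (fderiv ℝ Fl) p (ρ p.1 (V.1 p), 𝓑 p (V.1 p)) ((0 : A), U.1 p)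
      = - L (fderiv ℝ (fun q => 𝓑 q (V.1 p)) p ((0 : A), U.1 p)) := by
    rw [hsymm]
    rw [key1 (V.1 p) (U.1 p)]
    rw [hL]
  have hk : L (fderiv ℝ (fun q => 𝓑 q (V.1 p)) p ((0 : A), U.1 p))
      = L (fderiv ℝ (fun q => 𝓑 q (U.1 p)) p ((0 : A), V.1 p)) + L (Lb p.1 (U.1 p) (V.1 p)) := by
    rw [key2, map_add]
  rw [e1, e2] at *
  linarith [hk]
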